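/- Let j ∈ ℤ and let (c_k)_{k≥1} be a sequence of complex numbers, and define a_m = ∑_{k=1}^{m} F^{|j|}_{m,k} c_k for m ≥ 1, where F^{|j|}_{m,k} = a^{|j|,k-1}_{m,m+|j|}. Then the forward substitution recursion c_{k+1} = -√(π(|j|+2k+1)) · binom(|j|+2k, k) · a_{k+1} - ∑_{i=1}^{k} c_i · √((|j|+2k+1)(|j|+2i-1))/(|j|+k+i) · binom(|j|+2k, k-i+1) recovers (c_k): i.e., for all k ≥ 0 the right-hand side evaluated at the data (a_m) equals c_{k+1}. -/

import Mathlib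

open Real

/-- The explicit matrix elements `a^{j,k}_{m,n}` of the linearized EIT forward map
in the Zernike/Fourier bases. -/
noncomputable def acoef (j : ℤ) (k : ℕ) (m n : ℤ) : ℝ :=
  if n = m + j ∧ (k : ℤ) < min |m| |n| ∧ m * n > 0 then
    -(1 / Real.sqrt π) * Real.sqrt ((j.natAbs : ℝ) + 2 * k + 1) /
        (((min |m| |n| : ℤ) : ℝ) + (j.natAbs : ℝ) + k) *
      ∏ i ∈ Finset.Icc 1 k,
        (((min |m| |n| : ℤ) : ℝ) - i) / ((j.natAbs : ℝ) + ((min |m| |n| : ℤ) : ℝ) + k - i)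
  else 0

/-- The entries of the infinite lower triangular matrix `F^{|j|}`:
`F^{|j|}_{m,k} = a^{|j|,k-1}_{m,m+|j|}` for `1 ≤ k ≤ m`, zero otherwise. -/
noncomputable def Fmat (j : ℤ) (m k : ℕ) : ℝ :=
  if 1 ≤ k ∧ k ≤ m then acoef |j| (k - 1) (m : ℤ) ((m : ℤ) + |j|) else 0

open Finset in

lemma prodDen (p : ℕ) : ∀ N : ℕ, ∏ t ∈ Finset.Icc 1 p, ((N:ℝ) + p + 1 - t) = ((N + p).factorial : ℝ) / (N.factorial : ℝ) := by
  induction p with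
  | zero =>
    intro N; simp [div_self (show (N.factorial:ℝ) ≠ 0 by positivity)]
  | succ p ih =>
    intro N
    rw [Finset.prod_Icc_succ_top (by omega)]
    have h1 : ∏ k ∈ Finset.Icc 1 p, ((N:ℝ) + ((p:ℕ)+1:ℕ) + 1 - k) = ∏ t ∈ Finset.Icc 1 p, (((N+1:ℕ):ℝ) + p + 1 - t) := by
      apply Finset.prod_congr rfl; intro t _; push_cast; ring
    rw [h1, ih (N+1)]
    have h5 : N + (p+1) = N+1+p := by omega
    rw [h5]
    have h2 : ((N+1).factorial : ℝ) ≠ 0 := by positivity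
    have h3 : (N.factorial : ℝ) ≠ 0 := by positivity
    have h4 : ((N+1).factorial : ℝ) = ((N:ℝ)+1) * N.factorial := by
      rw [Nat.factorial_succ]; push_cast; ring
    rw [h4]
    field_simp
    push_cast
    ring


lemma aux_div (a x y : ℝ) (hx : x ≠ 0) (hy : y ≠ 0) : a / (x*y) * x = a/y := by
  field_simp

lemma prodNum (p : ℕ) : ∀ k : ℕ, p ≤ k → ∏ t ∈ Finset.Icc 1 p, ((k:ℝ) + 1 - t) = (k.factorial : ℝ) / ((k - p).factorial : ℝ) := by
  induction p with
  | zero =>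
    intro k _; simp [div_self (show (k.factorial:ℝ) ≠ 0 by positivity)]
  | succ p ih =>
    intro k hk
    rw [Finset.prod_Icc_succ_top (by omega)]
    rw [ih k (by omega)]
    have h5 : k - p = (k - (p+1)) + 1 := by omega
    have h8 : ((k-p).factorial : ℝ) = (((k-(p+1):ℕ):ℝ) + 1) * ((k-(p+1)).factorial : ℝ) := by
      rw [h5, Nat.factorial_succ]; push_cast; ring
    have h6 : ((k:ℝ) + 1 - ((p:ℕ)+1:ℕ)) = ((k - (p+1) : ℕ) : ℝ) + 1 := by
      push_cast [Nat.cast_sub (show p+1 ≤ k from hk)]; ring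
    rw [h8, h6]
    have h2 : ((k-(p+1)).factorial : ℝ) ≠ 0 := by positivity
    have h7 : ((k-(p+1):ℕ):ℝ) + 1 ≠ 0 := by positivity
    exact aux_div _ _ _ h7 h2

lemma Fmat_val (j : ℤ) (k p : ℕ) (hp : p ≤ k) :
    Fmat j (k+1) (p+1) =
      -(1 / Real.sqrt π) * Real.sqrt ((j.natAbs : ℝ) + 2*p + 1) / ((k:ℝ) + 1 + (j.natAbs:ℝ) + p) *
        (((k.factorial : ℝ) / ((k-p).factorial : ℝ)) * (((j.natAbs + k).factorial : ℝ) / ((j.natAbs + k + p).factorial : ℝ))) := by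
  have hm : ((k+1 : ℕ) : ℤ) = (k : ℤ) + 1 := by push_cast; ring
  rw [Fmat]
  rw [if_pos ⟨by omega, by omega⟩]
  rw [acoef]
  have habs1 : |((k+1:ℕ):ℤ)| = (k:ℤ)+1 := by rw [abs_of_nonneg (by positivity)]; push_cast; ring
  have habs2 : (abs (((k+1:ℕ):ℤ) + |j|)) = (k:ℤ)+1+|j| := by
    rw [abs_of_nonneg (by positivity)]; push_cast; ring
  have hmin : min |((k+1:ℕ):ℤ)| (abs (((k+1:ℕ):ℤ) + |j|)) = (k:ℤ)+1 := by
    have hj := abs_nonneg j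
    rw [habs1, habs2]; omega
  have hcond : (((k+1:ℕ):ℤ) + |j|) = ((k+1:ℕ):ℤ) + |j| ∧ ((p+1-1 : ℕ) : ℤ) < min |((k+1:ℕ):ℤ)| (abs (((k+1:ℕ):ℤ) + |j|)) ∧ ((k+1:ℕ):ℤ) * (((k+1:ℕ):ℤ) + |j|) > 0 := by
    refine ⟨rfl, ?_, ?_⟩
    · have hj := abs_nonneg j
      rw [hmin]; push_cast; omega
    · have h1 : (0:ℤ) < ((k+1:ℕ):ℤ) := by positivity
      have h2 : (0:ℤ) < ((k+1:ℕ):ℤ) + |j| := by positivity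
      exact mul_pos h1 h2
  rw [if_pos hcond, hmin]
  have hJ : (|j|).natAbs = j.natAbs := by simp [Int.natAbs_abs]
  have hps : p + 1 - 1 = p := by omega
  rw [hJ, hps]
  have hcast : (((k:ℤ)+1 : ℤ) : ℝ) = (k:ℝ) + 1 := by push_cast; ring
  rw [hcast]
  congr 1
  rw [show ∏ i ∈ Finset.Icc 1 p, (((k:ℝ)+1) - i) / ((j.natAbs : ℝ) + ((k:ℝ)+1) + p - i)
      = (∏ i ∈ Finset.Icc 1 p, (((k:ℝ)+1) - i)) / (∏ i ∈ Finset.Icc 1 p, ((j.natAbs : ℝ) + ((k:ℝ)+1) + p - i)) from Finset.prod_div_distrib _ _]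
  have e1 : ∏ i ∈ Finset.Icc 1 p, (((k:ℝ)+1) - i) = (k.factorial : ℝ) / ((k-p).factorial : ℝ) := prodNum p k hp
  have e2 : ∏ i ∈ Finset.Icc 1 p, ((j.natAbs : ℝ) + ((k:ℝ)+1) + p - i)
      = ((j.natAbs + k + p).factorial : ℝ) / ((j.natAbs + k).factorial : ℝ) := by
    have := prodDen p (j.natAbs + k)
    rw [← this]
    apply Finset.prod_congr rfl
    intro t _
    push_cast
    ring
  rw [e1, e2]
  rw [div_div_eq_mul_div, div_mul_eq_mul_div, mul_comm, mul_div_assoc, mul_div_assoc]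
  ring

lemma keyNat (J k p : ℕ) (hp : p ≤ k) :
    (J+2*k).choose k * k.factorial * (J+k).factorial
      = (J+2*k).choose (k-p) * (k-p).factorial * (J+k+p).factorial := by
  have h1 := Nat.choose_mul_factorial_mul_factorial (show k ≤ J+2*k by omega)
  have h2 := Nat.choose_mul_factorial_mul_factorial (show k-p ≤ J+2*k by omega)
  rw [show J+2*k-k = J+k by omega] at h1
  rw [show J+2*k-(k-p) = J+k+p by omega] at h2
  rw [h1, h2]

lemma K2 (j : ℤ) (k p : ℕ) (hp : p ≤ k) :
    Real.sqrt (π * ((j.natAbs:ℝ) + 2*k + 1)) * (((j.natAbs+2*k).choose k : ℕ) : ℝ) * Fmat j (k+1) (p+1)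
      = -(Real.sqrt (((j.natAbs:ℝ)+2*k+1) * ((j.natAbs:ℝ)+2*p+1)) / ((j.natAbs:ℝ)+k+p+1)) * (((j.natAbs+2*k).choose (k-p) : ℕ) : ℝ) := by
  rw [Fmat_val j k p hp]
  have hA : (0:ℝ) ≤ (j.natAbs:ℝ) + 2*k + 1 := by positivity
  have hB : (0:ℝ) ≤ (j.natAbs:ℝ) + 2*p + 1 := by positivity
  rw [Real.sqrt_mul Real.pi_nonneg, Real.sqrt_mul hA]
  have hsp : Real.sqrt π ≠ 0 := by
    have := Real.pi_pos; positivity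
  have hf1 : ((k-p).factorial : ℝ) ≠ 0 := by positivity
  have hf2 : (((j.natAbs + k + p)).factorial : ℝ) ≠ 0 := by positivity
  have hd1 : (k:ℝ) + 1 + (j.natAbs:ℝ) + p ≠ 0 := by positivity
  have hd2 : (j.natAbs:ℝ) + k + p + 1 ≠ 0 := by positivity
  have hkey : (((j.natAbs+2*k).choose k : ℕ) : ℝ) * k.factorial * ((j.natAbs+k).factorial : ℝ)
      = (((j.natAbs+2*k).choose (k-p) : ℕ) : ℝ) * ((k-p).factorial : ℝ) * (((j.natAbs+k+p)).factorial : ℝ) := by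
    exact_mod_cast congrArg (Nat.cast (R := ℝ)) (keyNat j.natAbs k p hp)
  have hC1 : (((j.natAbs+2*k).choose k : ℕ) : ℝ) ≠ 0 := by
    have := Nat.choose_pos (show k ≤ j.natAbs+2*k by omega)
    positivity
  have hprod : ((k.factorial : ℝ) / ((k-p).factorial : ℝ)) * (((j.natAbs + k).factorial : ℝ) / (((j.natAbs + k + p)).factorial : ℝ))
      = (((j.natAbs+2*k).choose (k-p) : ℕ) : ℝ) / (((j.natAbs+2*k).choose k : ℕ) : ℝ) := by
    rw [div_mul_div_comm, div_eq_div_iff (by positivity) hC1]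
    linear_combination hkey
  rw [hprod]
  field_simp
  ring

lemma K1 (j : ℤ) (k : ℕ) :
    Real.sqrt (π * ((j.natAbs:ℝ) + 2*k + 1)) * (((j.natAbs+2*k).choose k : ℕ) : ℝ) * Fmat j (k+1) (k+1)
      = -1 := by
  have h := K2 j k k le_rfl
  rw [h]
  have hA : (0:ℝ) ≤ (j.natAbs:ℝ) + 2*k + 1 := by positivity
  rw [Real.sqrt_mul_self hA]
  rw [Nat.sub_self, Nat.choose_zero_right]
  have hd : (j.natAbs:ℝ) + k + k + 1 ≠ 0 := by positivity
  rw [Nat.cast_one, mul_one, neg_div', div_eq_iff hd]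
  ring

lemma K2C (j : ℤ) (k i : ℕ) (h1 : 1 ≤ i) (h2 : i ≤ k) :
    -((Real.sqrt (π * ((j.natAbs : ℝ) + 2 * k + 1)) : ℝ) : ℂ) *
        ((Nat.choose (j.natAbs + 2 * k) k : ℕ) : ℂ) * ((Fmat j (k+1) i : ℝ) : ℂ)
      = ((Real.sqrt (((j.natAbs : ℝ) + 2 * k + 1) * ((j.natAbs : ℝ) + 2 * i - 1)) /
            ((j.natAbs : ℝ) + k + i) : ℝ) : ℂ) *
        ((Nat.choose (j.natAbs + 2 * k) (k - i + 1) : ℕ) : ℂ) := by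
  obtain ⟨p, rfl⟩ : ∃ p, i = p + 1 := ⟨i - 1, by omega⟩
  have hp : p ≤ k := by omega
  have hr := K2 j k p hp
  have e1 : ((j.natAbs : ℝ) + 2 * ((p+1:ℕ):ℝ) - 1) = (j.natAbs:ℝ) + 2*p + 1 := by push_cast; ring
  have e2 : ((j.natAbs : ℝ) + (k:ℝ) + ((p+1:ℕ):ℝ)) = (j.natAbs:ℝ) + k + p + 1 := by push_cast; ring
  have e3 : k - (p+1) + 1 = k - p := by omega
  rw [show ((j.natAbs : ℝ) + 2 * ((p+1:ℕ):ℕ) - 1) = (j.natAbs:ℝ) + 2*p + 1 from e1] 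
  rw [show ((j.natAbs : ℝ) + (k:ℝ) + ((p+1:ℕ):ℕ)) = (j.natAbs:ℝ) + k + p + 1 from e2]
  rw [e3]
  have : ((Real.sqrt (π * ((j.natAbs:ℝ) + 2*k + 1)) * (((j.natAbs+2*k).choose k : ℕ) : ℝ) * Fmat j (k+1) (p+1) : ℝ) : ℂ)
      = ((-(Real.sqrt (((j.natAbs:ℝ)+2*k+1) * ((j.natAbs:ℝ)+2*p+1)) / ((j.natAbs:ℝ)+k+p+1)) * (((j.natAbs+2*k).choose (k-p) : ℕ) : ℝ) : ℝ) : ℂ) := by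
    exact_mod_cast congrArg (Complex.ofReal) hr
  push_cast at this ⊢
  linear_combination -this


/-- Forward substitution: the explicit recursion recovers the Zernike coefficients from
the data `a_m = ∑_{k=1}^m F^{|j|}_{m,k} c_k`. -/
theorem forward_substitution_recovers (j : ℤ) (c a : ℕ → ℂ)
    (ha : ∀ m : ℕ, 1 ≤ m → a m = ∑ k ∈ Finset.Icc 1 m, (Fmat j m k : ℂ) * c k) :
    ∀ k : ℕ,
      c (k + 1) =
        -((Real.sqrt (π * ((j.natAbs : ℝ) + 2 * k + 1)) : ℝ) : ℂ) *
            ((Nat.choose (j.natAbs + 2 * k) k : ℕ) : ℂ) * a (k + 1) -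
          ∑ i ∈ Finset.Icc 1 k,
            c i *
              ((Real.sqrt (((j.natAbs : ℝ) + 2 * k + 1) * ((j.natAbs : ℝ) + 2 * i - 1)) /
                  ((j.natAbs : ℝ) + k + i) : ℝ) : ℂ) *
              ((Nat.choose (j.natAbs + 2 * k) (k - i + 1) : ℕ) : ℂ) := by
  intro k
  rw [ha (k+1) (by omega), Finset.sum_Icc_succ_top (show 1 ≤ k+1 by omega)]
  have hdiag : ((Real.sqrt (π * ((j.natAbs:ℝ) + 2*k + 1)) : ℝ) : ℂ) *
      ((Nat.choose (j.natAbs + 2*k) k : ℕ) : ℂ) * ((Fmat j (k+1) (k+1) : ℝ) : ℂ) = -1 := by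
    have h := congrArg Complex.ofReal (K1 j k)
    push_cast at h ⊢
    linear_combination h
  have hS : -((Real.sqrt (π * ((j.natAbs:ℝ) + 2*k + 1)) : ℝ) : ℂ) *
        ((Nat.choose (j.natAbs + 2*k) k : ℕ) : ℂ) *
        ∑ i ∈ Finset.Icc 1 k, ((Fmat j (k+1) i : ℝ) : ℂ) * c i
      = ∑ i ∈ Finset.Icc 1 k,
          c i *
            ((Real.sqrt (((j.natAbs : ℝ) + 2 * k + 1) * ((j.natAbs : ℝ) + 2 * i - 1)) /
                ((j.natAbs : ℝ) + k + i) : ℝ) : ℂ) *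
            ((Nat.choose (j.natAbs + 2 * k) (k - i + 1) : ℕ) : ℂ) := by
    rw [Finset.mul_sum]
    apply Finset.sum_congr rfl
    intro i hi
    simp only [Finset.mem_Icc] at hi
    have h := K2C j k i hi.1 hi.2
    linear_combination c i * h
  linear_combination -hS + c (k+1) * hdiag
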